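/- For all x ≥ 3, 1 < (3Γ(x/3+7/3)/(2Γ(x/3+2)))^{1/2} · (Γ(x/2+1)/Γ(x/2+3/2)) · ((x+1)/3)^{1/3} ≤ 3^{7/6}·√(π·Γ(10/3))/2^{10/3} ≈ 1.05599, with the maximum attained at x = 3. -/

import Mathlib

/-- The function appearing in the second technical lemma. -/
noncomputable def g11 (x : ℝ) : ℝ :=
  Real.sqrt (3 * Real.Gamma (x/3 + 7/3) / (2 * Real.Gamma (x/3 + 2)))
    * (Real.Gamma (x/2 + 1) / Real.Gamma (x/2 + 3/2))
    * ((x + 1) / 3) ^ ((1:ℝ)/3)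

namespace Stmt11aux
open Real Set Filter Topology Finset

noncomputable def f : ℝ → ℝ := Real.log ∘ Real.Gamma
noncomputable def ψ : ℝ → ℝ := deriv f

lemma hc : ConvexOn ℝ (Ioi 0) f := Real.convexOn_log_Gamma

lemma f_diff {x : ℝ} (hx : 0 < x) : DifferentiableAt ℝ f x := by
  refine ((Real.differentiableAt_Gamma ?_).log (Real.Gamma_ne_zero ?_)) <;>
    exact fun m => ne_of_gt (by have := Nat.cast_nonneg (α := ℝ) m; linarith)

lemma hasDerivAt_f {x : ℝ} (hx : 0 < x) : HasDerivAt f (ψ x) x :=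
  (f_diff hx).hasDerivAt

lemma f_rec {x : ℝ} (hx : 0 < x) : f (x + 1) = f x + Real.log x := by
  simp only [f, Function.comp_apply, Real.Gamma_add_one hx.ne',
    Real.log_mul hx.ne' (Real.Gamma_pos_of_pos hx).ne', add_comm]

lemma ψ_rec {x : ℝ} (hx : 0 < x) : ψ (x + 1) = ψ x + 1 / x := by
  unfold ψ
  rw [← deriv_comp_add_const, one_div, ← Real.deriv_log,
    ← deriv_add (f_diff hx) (Real.differentiableAt_log hx.ne')]
  apply Filter.EventuallyEq.deriv_eq
  filter_upwards [eventually_gt_nhds hx] using fun y hy => f_rec hy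

lemma ψ_le_slope {a b : ℝ} (ha : 0 < a) (hab : a < b) :
    ψ a ≤ (f b - f a) / (b - a) := by
  have := hc.deriv_le_slope (mem_Ioi.mpr ha) (mem_Ioi.mpr (ha.trans hab)) hab (f_diff ha)
  rwa [slope_def_field] at this

lemma slope_le_ψ {a b : ℝ} (ha : 0 < a) (hab : a < b) :
    (f b - f a) / (b - a) ≤ ψ b := by
  have := hc.slope_le_deriv (mem_Ioi.mpr ha) (mem_Ioi.mpr (ha.trans hab))
    hab (f_diff (ha.trans hab))
  rwa [slope_def_field] at this

lemma ψ_mono {a b : ℝ} (ha : 0 < a) (hab : a ≤ b) : ψ a ≤ ψ b := by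
  rcases eq_or_lt_of_le hab with rfl | h
  · exact le_refl _
  · exact (ψ_le_slope ha h).trans (slope_le_ψ ha h)

lemma ψ_le_log {u : ℝ} (hu : 0 < u) : ψ u ≤ Real.log u := by
  have h := ψ_le_slope hu (by linarith : u < u + 1)
  rwa [f_rec hu, add_sub_cancel_left, add_sub_cancel_left, div_one] at h

lemma log_le_ψ {u : ℝ} (hu : 1 < u) : Real.log (u - 1) ≤ ψ u := by
  have h0 : (0:ℝ) < u - 1 := by linarith
  have h := slope_le_ψ h0 (by linarith : u - 1 < u)
  have : f u = f (u-1) + Real.log (u-1) := by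
    have := f_rec h0; rwa [sub_add_cancel] at this
  rw [this] at h
  simpa using h


lemma ψ_shift {a : ℝ} (ha : 0 < a) (N : ℕ) :
    ψ (a + N) = ψ a + ∑ n ∈ Finset.range N, 1 / (a + n) := by
  induction N with
  | zero => simp
  | succ N ih =>
    have h1 : (0:ℝ) < a + N := by positivity
    have : a + (N+1 : ℕ) = (a + N) + 1 := by push_cast; ring
    rw [this, ψ_rec h1, ih, Finset.sum_range_succ]
    ring

lemma tendsto_S {a s : ℝ} (ha : 0 < a) (hs : 0 < s) (hs1 : s ≤ 1) :
    Tendsto (fun N => ∑ n ∈ Finset.range N, (1 / (a + n) - 1 / (a + s + n)))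
      atTop (𝓝 (ψ (a + s) - ψ a)) := by
  have key : ∀ N : ℕ, (∑ n ∈ Finset.range N, (1 / (a + n) - 1 / (a + s + n)))
      = (ψ (a + s) - ψ a) - (ψ (a + s + N) - ψ (a + N)) := by
    intro N
    have h1 := ψ_shift ha N
    have h2 := ψ_shift (by linarith : (0:ℝ) < a + s) N
    rw [Finset.sum_sub_distrib]
    rw [eq_sub_iff_add_eq]
    have e1 : ∑ n ∈ Finset.range N, 1 / (a + n) = ψ (a + N) - ψ a := by rw [h1]; ring
    have e2 : ∑ n ∈ Finset.range N, 1 / (a + s + n) = ψ (a + s + N) - ψ (a + s) := by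
      rw [h2]; ring
    rw [e1, e2]; ring
  have hE : Tendsto (fun N : ℕ => ψ (a + s + N) - ψ (a + N)) atTop (𝓝 0) := by
    have hub : Tendsto (fun N : ℕ => Real.log ((a + s + N) / (a + N - 1))) atTop (𝓝 0) := by
      have h1 : Tendsto (fun N : ℕ => (a + s + N) / (a + N - 1)) atTop (𝓝 1) := by
        have hd : Tendsto (fun N : ℕ => a + (N:ℝ) - 1) atTop atTop := by
          apply tendsto_atTop_add_const_right
          exact tendsto_atTop_add_const_left _ a tendsto_natCast_atTop_atTop
        have h2 : Tendsto (fun N : ℕ => 1 + (s + 1) / (a + N - 1)) atTop (𝓝 (1 + 0)) :=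
          tendsto_const_nhds.add (tendsto_const_nhds.div_atTop hd)
        rw [add_zero] at h2
        apply h2.congr'
        filter_upwards [hd.eventually_gt_atTop 0] with N hN
        field_simp
        ring
      have := (Real.continuousAt_log one_ne_zero).tendsto.comp h1
      simpa [Function.comp_def] using this
    refine squeeze_zero' ?_ ?_ hub
    · filter_upwards with N
      exact sub_nonneg.mpr (ψ_mono (by positivity) (by linarith))
    · filter_upwards [eventually_gt_atTop 0] with N hN
      have hN1 : (1:ℝ) ≤ (N:ℝ) := by exact_mod_cast hN
      have hl : Real.log (a + s + N) - Real.log (a + N - 1)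
          = Real.log ((a + s + N) / (a + N - 1)) := by
        rw [Real.log_div (by positivity) (by nlinarith)]
      rw [← hl]
      have b1 : ψ (a + s + N) ≤ Real.log (a + s + N) := ψ_le_log (by positivity)
      have b2 : Real.log (a + N - 1) ≤ ψ (a + N) := by
        have := log_le_ψ (u := a + N) (by nlinarith)
        simpa using this
      linarith
  have := tendsto_const_nhds (x := ψ (a + s) - ψ a) (f := atTop (α := ℕ)) |>.sub hE
  rw [sub_zero] at this
  exact this.congr (fun N => (key N).symm)

lemma psi_diff_le {a : ℝ} (ha : 1 ≤ a) :
    ψ (a + 1/3) - ψ a ≤ (1/3) / (a - 1/3) := by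
  have ha0 : (0:ℝ) < a := by linarith
  refine le_of_tendsto (tendsto_S ha0 (by norm_num) (by norm_num)) ?_
  filter_upwards with N
  set F : ℕ → ℝ := fun n => (1/3) / (a - 1/3 + n) with hF
  have hterm : ∀ n ∈ Finset.range N, 1 / (a + n) - 1 / (a + 1/3 + n)
      ≤ F n - F (n + 1) := by
    intro n _
    have hn : (0:ℝ) ≤ n := Nat.cast_nonneg n
    have p1 : (0:ℝ) < a + n := by linarith
    have p2 : (0:ℝ) < a + 1/3 + n := by linarith
    have p3 : (0:ℝ) < a - 1/3 + n := by linarith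
    have p4 : (0:ℝ) < a - 1/3 + ((n:ℝ) + 1) := by linarith
    simp only [hF]
    push_cast
    rw [div_sub_div _ _ p1.ne' p2.ne', div_sub_div _ _ p3.ne' p4.ne',
      div_le_div_iff₀ (by positivity) (by positivity)]
    nlinarith [sq_nonneg (a + n), mul_pos p1 p2]
  have hNpos : (0:ℝ) ≤ F N := by
    have hn : (0:ℝ) ≤ N := Nat.cast_nonneg N
    have : (0:ℝ) < a - 1/3 + N := by linarith
    exact div_nonneg (by norm_num) this.le
  calc ∑ n ∈ Finset.range N, (1 / (a + n) - 1 / (a + 1/3 + n))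
      ≤ ∑ n ∈ Finset.range N, (F n - F (n + 1)) := Finset.sum_le_sum hterm
    _ = F 0 - F N := Finset.sum_range_sub' F N
    _ ≤ (1/3) / (a - 1/3) := by
        simp only [hF, Nat.cast_zero, add_zero]
        linarith

lemma psi_diff_ge {a : ℝ} (ha : 1 ≤ a) :
    (1/2) / (a * (a + 1/2)) + (1/2) / (a + 1) ≤ ψ (a + 1/2) - ψ a := by
  have ha0 : (0:ℝ) < a := by linarith
  set S : ℕ → ℝ := fun N => ∑ n ∈ Finset.range N, (1 / (a + n) - 1 / (a + 1/2 + n)) with hSdef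
  have hS : Tendsto S atTop (𝓝 (ψ (a + 1/2) - ψ a)) :=
    tendsto_S ha0 (by norm_num) (by norm_num)
  have hS' : Tendsto (fun N => S (N + 1)) atTop (𝓝 (ψ (a + 1/2) - ψ a)) :=
    hS.comp (tendsto_add_atTop_nat 1)
  set c : ℕ → ℝ := fun N => (1/2) / (a * (a + 1/2)) + (1/2) / (a + 1) - (1/2) / (a + 1 + N)
    with hcdef
  have hc : Tendsto c atTop (𝓝 ((1/2) / (a * (a + 1/2)) + (1/2) / (a + 1))) := by
    have h0 : Tendsto (fun N : ℕ => (1/2 : ℝ) / (a + 1 + N)) atTop (𝓝 0) :=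
      tendsto_const_nhds.div_atTop
        (tendsto_atTop_add_const_left _ (a + 1) tendsto_natCast_atTop_atTop)
    have := (tendsto_const_nhds
      (x := (1/2) / (a * (a + 1/2)) + (1/2) / (a + 1)) (f := atTop (α := ℕ))).sub h0
    rwa [sub_zero] at this
  refine le_of_tendsto_of_tendsto' hc hS' ?_
  intro N
  set G : ℕ → ℝ := fun n => (1/2) / (a + 1 + n) with hG
  have hterm : ∀ n ∈ Finset.range N, G n - G (n + 1)
      ≤ 1 / (a + (n + 1 : ℕ)) - 1 / (a + 1/2 + (n + 1 : ℕ)) := by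
    intro n _
    have hn : (0:ℝ) ≤ n := Nat.cast_nonneg n
    have p1 : (0:ℝ) < a + 1 + n := by linarith
    have p2 : (0:ℝ) < a + 1 + ((n:ℝ) + 1) := by linarith
    have p3 : (0:ℝ) < a + ((n:ℝ) + 1) := by linarith
    have p4 : (0:ℝ) < a + 1/2 + ((n:ℝ) + 1) := by linarith
    simp only [hG]
    push_cast
    rw [div_sub_div _ _ p1.ne' p2.ne', div_sub_div _ _ p3.ne' p4.ne',
      div_le_div_iff₀ (by positivity) (by positivity)]
    nlinarith [mul_pos p3 p4]
  have htel : ∑ n ∈ Finset.range N, (G n - G (n + 1)) = G 0 - G N :=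
    Finset.sum_range_sub' G N
  have hsum : G 0 - G N ≤ ∑ n ∈ Finset.range N, (1 / (a + (n+1:ℕ)) - 1 / (a + 1/2 + (n+1:ℕ))) := by
    rw [← htel]; exact Finset.sum_le_sum hterm
  have hsplit : S (N + 1)
      = (∑ n ∈ Finset.range N, (1 / (a + (n+1:ℕ)) - 1 / (a + 1/2 + (n+1:ℕ))))
        + (1 / (a + (0:ℕ)) - 1 / (a + 1/2 + (0:ℕ))) := by
    simp only [hSdef]
    exact Finset.sum_range_succ' _ N
  have ht0 : 1 / (a + (0:ℕ)) - 1 / (a + 1/2 + (0:ℕ)) = (1/2) / (a * (a + 1/2)) := by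
    have p1 : a ≠ 0 := ha0.ne'
    have p2 : a + 1/2 ≠ 0 := by positivity
    push_cast
    field_simp
    ring
  have : c N = ((1/2) / (a + 1) - (1/2) / (a + 1 + N)) + (1/2) / (a * (a + 1/2)) := by
    simp only [hcdef]; ring
  rw [this, hsplit, ht0]
  have hG0 : G 0 = (1/2) / (a + 1) := by simp [hG]
  have hGN : G N = (1/2) / (a + 1 + N) := rfl
  have := hsum
  rw [hG0, hGN] at this
  linarith

noncomputable def h (x : ℝ) : ℝ :=
  (1/2) * (Real.log 3 + f (x/3 + 7/3) - Real.log 2 - f (x/3 + 2))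
    + (f (x/2 + 1) - f (x/2 + 3/2)) + (1/3) * (Real.log (x + 1) - Real.log 3)

noncomputable def hd (x : ℝ) : ℝ :=
  (1/6) * (ψ (x/3 + 7/3) - ψ (x/3 + 2)) + (1/2) * (ψ (x/2 + 1) - ψ (x/2 + 3/2))
    + 1 / (3 * (x + 1))

lemma g11_eq {x : ℝ} (hx : 0 < x) : g11 x = Real.exp (h x) := by
  have p1 : (0:ℝ) < x/3 + 7/3 := by linarith
  have p2 : (0:ℝ) < x/3 + 2 := by linarith
  have p3 : (0:ℝ) < x/2 + 1 := by linarith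
  have p4 : (0:ℝ) < x/2 + 3/2 := by linarith
  have g1 := Real.Gamma_pos_of_pos p1
  have g2 := Real.Gamma_pos_of_pos p2
  have g3 := Real.Gamma_pos_of_pos p3
  have g4 := Real.Gamma_pos_of_pos p4
  have hA : (0:ℝ) < 3 * Real.Gamma (x/3 + 7/3) / (2 * Real.Gamma (x/3 + 2)) := by positivity
  have hC : (0:ℝ) < (x + 1) / 3 := by linarith
  rw [g11, Real.sqrt_eq_rpow, Real.rpow_def_of_pos hA, Real.rpow_def_of_pos hC,
    show Real.Gamma (x/2+1) / Real.Gamma (x/2+3/2)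
      = Real.exp (f (x/2+1) - f (x/2+3/2)) by
        rw [Real.exp_sub]
        simp only [f, Function.comp_apply, Real.exp_log g3, Real.exp_log g4],
    ← Real.exp_add, ← Real.exp_add]
  congr 1
  rw [Real.log_div (by positivity) (by positivity), Real.log_mul (by norm_num) g1.ne',
    Real.log_mul (by norm_num) g2.ne', Real.log_div (by linarith) (by norm_num)]
  simp only [f, h, Function.comp_apply]
  ring

lemma hasDerivAt_h {x : ℝ} (hx : 0 < x) : HasDerivAt h (hd x) x := by
  have p1 : (0:ℝ) < x/3 + 7/3 := by linarith
  have p2 : (0:ℝ) < x/3 + 2 := by linarith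
  have p3 : (0:ℝ) < x/2 + 1 := by linarith
  have p4 : (0:ℝ) < x/2 + 3/2 := by linarith
  have i1 : HasDerivAt (fun x : ℝ => x/3 + 7/3) (1/3) x := by
    simpa using ((hasDerivAt_id x).div_const 3).add_const (7/3:ℝ)
  have i2 : HasDerivAt (fun x : ℝ => x/3 + 2) (1/3) x := by
    simpa using ((hasDerivAt_id x).div_const 3).add_const (2:ℝ)
  have i3 : HasDerivAt (fun x : ℝ => x/2 + 1) (1/2) x := by
    simpa using ((hasDerivAt_id x).div_const 2).add_const (1:ℝ)
  have i4 : HasDerivAt (fun x : ℝ => x/2 + 3/2) (1/2) x := by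
    simpa using ((hasDerivAt_id x).div_const 2).add_const (3/2:ℝ)
  have h1 : HasDerivAt (fun x : ℝ => f (x/3 + 7/3)) (ψ (x/3+7/3) * (1/3)) x :=
    by have := (hasDerivAt_f p1).comp x i1; exact this
  have h2 : HasDerivAt (fun x : ℝ => f (x/3 + 2)) (ψ (x/3+2) * (1/3)) x :=
    by have := (hasDerivAt_f p2).comp x i2; exact this
  have h3 : HasDerivAt (fun x : ℝ => f (x/2 + 1)) (ψ (x/2+1) * (1/2)) x :=
    by have := (hasDerivAt_f p3).comp x i3; exact this
  have h4 : HasDerivAt (fun x : ℝ => f (x/2 + 3/2)) (ψ (x/2+3/2) * (1/2)) x :=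
    by have := (hasDerivAt_f p4).comp x i4; exact this
  have h5 : HasDerivAt (fun x : ℝ => Real.log (x + 1)) (1/(x+1) * 1) x := by
    have := (Real.hasDerivAt_log (by linarith : x + 1 ≠ 0)).comp x
      ((hasDerivAt_id x).add_const 1)
    simpa [one_div, Function.comp_def] using this
  have H := ((((h1.const_add (Real.log 3)).sub_const (Real.log 2)).sub h2).const_mul
      (1/2:ℝ)).add ((h3.sub h4).add ((h5.sub_const (Real.log 3)).const_mul (1/3:ℝ)))
  have e : h = fun x : ℝ => (1/2) * (Real.log 3 + f (x/3 + 7/3) - Real.log 2 - f (x/3 + 2))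
      + ((f (x/2 + 1) - f (x/2 + 3/2)) + (1/3) * (Real.log (x + 1) - Real.log 3)) := by
    funext t; rw [h]; ring
  rw [e]
  refine H.congr_deriv ?_
  rw [hd]
  field_simp
  ring

lemma hd_neg {x : ℝ} (hx : 3 ≤ x) : hd x < 0 := by
  have e1 : x/3 + 7/3 = (x/3 + 2) + 1/3 := by ring
  have e2 : x/2 + 3/2 = (x/2 + 1) + 1/2 := by ring
  have b1 := psi_diff_le (a := x/3 + 2) (by linarith)
  have b2 := psi_diff_ge (a := x/2 + 1) (by linarith)
  rw [hd, e1, e2]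
  have key : (1/6) * ((1/3) / (x/3 + 2 - 1/3))
      - (1/2) * ((1/2) / ((x/2 + 1) * ((x/2 + 1) + 1/2)) + (1/2) / ((x/2 + 1) + 1))
      + 1 / (3 * (x + 1)) < 0 := by
    have d1 : (0:ℝ) < x + 1 := by linarith
    have d2 : (0:ℝ) < x + 2 := by linarith
    have d3 : (0:ℝ) < x + 3 := by linarith
    have d4 : (0:ℝ) < x + 4 := by linarith
    have d5 : (0:ℝ) < x + 5 := by linarith
    have hN : (0:ℝ) < x^3 + 6*x^2 - x - 54 := by nlinarith
    have hcalc : (1/6) * ((1/3) / (x/3 + 2 - 1/3))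
        - (1/2) * ((1/2) / ((x/2 + 1) * ((x/2 + 1) + 1/2)) + (1/2) / ((x/2 + 1) + 1))
        + 1 / (3 * (x + 1))
        = -((x^3 + 6*x^2 - x - 54) / (6 * (x+1) * (x+2) * (x+3) * (x+4) * (x+5))) := by
      have e1' : x/3 + 2 - 1/3 = (x+5)/3 := by ring
      have e2' : (x/2 + 1) * ((x/2 + 1) + 1/2) = (x+2)*(x+3)/4 := by ring
      have e3' : (x/2 + 1) + 1 = (x+4)/2 := by ring
      rw [e1', e2', e3']
      have m1 : x + 1 ≠ 0 := by positivity
      have m2 : x + 2 ≠ 0 := by positivity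
      have m3 : x + 3 ≠ 0 := by positivity
      have m4 : x + 4 ≠ 0 := by positivity
      have m5 : x + 5 ≠ 0 := by positivity
      field_simp
      ring
    rw [hcalc, neg_lt, neg_zero]
    positivity
  linarith

noncomputable def l (u : ℝ) : ℝ :=
  (1/6) * Real.log ((u+4)/(u+2)) - (1/3) * Real.log ((u+2)/(u+1))

lemma l_le_h {u : ℝ} (hu : 3 ≤ u) : l u ≤ h u := by
  have pa : (0:ℝ) < u/3 + 4/3 := by linarith
  have pb : (0:ℝ) < u/3 + 7/3 := by linarith
  have pw : (0:ℝ) < u/2 + 1 := by linarith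
  have pw1 : (0:ℝ) < u/2 + 2 := by linarith
  -- A1
  have cv1 := hc.2 (mem_Ioi.mpr pa) (mem_Ioi.mpr pb) (by norm_num : (0:ℝ) ≤ 1/3)
    (by norm_num : (0:ℝ) ≤ 2/3) (by norm_num)
  simp only [smul_eq_mul] at cv1
  have e1 : (1/3) * (u/3 + 4/3) + (2/3) * (u/3 + 7/3) = u/3 + 2 := by ring
  rw [e1] at cv1
  have r1 : f (u/3 + 7/3) = f (u/3 + 4/3) + Real.log (u/3 + 4/3) := by
    have := f_rec pa
    rw [show u/3 + 4/3 + 1 = u/3 + 7/3 by ring] at this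
    exact this
  have A1 : (1/3) * Real.log (u/3 + 4/3) ≤ f (u/3 + 7/3) - f (u/3 + 2) := by
    rw [r1] at cv1 ⊢; linarith
  -- A2
  have cv2 := hc.2 (mem_Ioi.mpr pw) (mem_Ioi.mpr pw1) (by norm_num : (0:ℝ) ≤ 1/2)
    (by norm_num : (0:ℝ) ≤ 1/2) (by norm_num)
  simp only [smul_eq_mul] at cv2
  have e2 : (1/2) * (u/2 + 1) + (1/2) * (u/2 + 2) = u/2 + 3/2 := by ring
  rw [e2] at cv2
  have r2 : f (u/2 + 2) = f (u/2 + 1) + Real.log (u/2 + 1) := by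
    have := f_rec pw
    rw [show u/2 + 1 + 1 = u/2 + 2 by ring] at this
    exact this
  have A2 : -(1/2) * Real.log (u/2 + 1) ≤ f (u/2 + 1) - f (u/2 + 3/2) := by
    rw [r2] at cv2; linarith
  -- combine
  have la : Real.log (u/3 + 4/3) = Real.log (u + 4) - Real.log 3 := by
    rw [show u/3 + 4/3 = (u+4)/3 by ring, Real.log_div (by linarith) (by norm_num)]
  have lw : Real.log (u/2 + 1) = Real.log (u + 2) - Real.log 2 := by
    rw [show u/2 + 1 = (u+2)/2 by ring, Real.log_div (by linarith) (by norm_num)]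
  have l1 : Real.log ((u+4)/(u+2)) = Real.log (u+4) - Real.log (u+2) :=
    Real.log_div (by linarith) (by linarith)
  have l2 : Real.log ((u+2)/(u+1)) = Real.log (u+2) - Real.log (u+1) :=
    Real.log_div (by linarith) (by linarith)
  rw [l, h, l1, l2]
  rw [la] at A1
  rw [lw] at A2
  linarith

lemma tendsto_l : Tendsto l atTop (𝓝 0) := by
  have gen : ∀ c : ℝ, Tendsto (fun u : ℝ => Real.log ((u + c)/(u + 1))) atTop (𝓝 0) := by
    intro c
    have h1 : Tendsto (fun u : ℝ => (u + c)/(u + 1)) atTop (𝓝 1) := by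
      have hd : Tendsto (fun u : ℝ => u + 1) atTop atTop :=
        tendsto_atTop_add_const_right _ 1 tendsto_id
      have h2 : Tendsto (fun u : ℝ => 1 + (c - 1)/(u + 1)) atTop (𝓝 (1 + 0)) :=
        tendsto_const_nhds.add (tendsto_const_nhds.div_atTop hd)
      rw [add_zero] at h2
      apply h2.congr'
      filter_upwards [eventually_gt_atTop 0] with u hu
      have : u + 1 ≠ 0 := by positivity
      field_simp
      ring
    have := (Real.continuousAt_log one_ne_zero).tendsto.comp h1
    simpa [Function.comp_def] using this
  have t1 : Tendsto (fun u : ℝ => Real.log ((u+4)/(u+2))) atTop (𝓝 0) := by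
    have := (gen 3).comp (tendsto_atTop_add_const_right atTop (1:ℝ) tendsto_id)
    apply this.congr
    intro u
    simp only [Function.comp_apply, id]
    ring_nf
  have t2 : Tendsto (fun u : ℝ => Real.log ((u+2)/(u+1))) atTop (𝓝 0) := gen 2
  have := (t1.const_mul (1/6 : ℝ)).sub (t2.const_mul (1/3 : ℝ))
  have el : l = fun u => (1/6) * Real.log ((u+4)/(u+2)) - (1/3) * Real.log ((u+2)/(u+1)) := rfl
  rw [el]
  simpa using this

lemma h_anti : StrictAntiOn h (Ici 3) := by
  apply strictAntiOn_of_deriv_neg (convex_Ici 3)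
  · intro x hx
    have : (0:ℝ) < x := lt_of_lt_of_le (by norm_num) hx
    exact (hasDerivAt_h this).continuousAt.continuousWithinAt
  · intro x hx
    rw [interior_Ici] at hx
    rw [(hasDerivAt_h (by linarith [mem_Ioi.mp hx] : (0:ℝ) < x)).deriv]
    exact hd_neg (le_of_lt (mem_Ioi.mp hx))

lemma h_nonneg {x : ℝ} (hx : 3 ≤ x) : 0 ≤ h x := by
  refine le_of_tendsto tendsto_l ?_
  filter_upwards [eventually_ge_atTop x, eventually_ge_atTop (3:ℝ)] with u hux hu3
  exact (l_le_h hu3).trans (h_anti.antitoneOn hx hu3 hux)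

lemma one_lt_g11 {x : ℝ} (hx : 3 ≤ x) : 1 < g11 x := by
  rw [g11_eq (by linarith)]
  have h1 : 0 ≤ h (x+1) := h_nonneg (by linarith)
  have h2 : h (x+1) < h x := h_anti hx (by simp only [Set.mem_Ici]; linarith) (by linarith)
  calc (1:ℝ) = Real.exp 0 := Real.exp_zero.symm
    _ < Real.exp (h x) := Real.exp_lt_exp.mpr (by linarith)

lemma g11_le_g11_three {x : ℝ} (hx : 3 ≤ x) : g11 x ≤ g11 3 := by
  rcases eq_or_lt_of_le hx with rfl | hlt
  · exact le_refl _
  · rw [g11_eq (by linarith), g11_eq (by norm_num : (0:ℝ) < 3)]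
    exact (Real.exp_lt_exp.mpr (h_anti (by simp only [Set.mem_Ici]; norm_num) (by simp only [Set.mem_Ici]; linarith) hlt)).le

lemma Gamma_three : Real.Gamma 3 = 2 := by
  rw [show (3:ℝ) = (2:ℕ) + 1 by norm_num, Real.Gamma_nat_eq_factorial]
  norm_num

lemma Gamma_five_halves : Real.Gamma (5/2) = 3/4 * Real.sqrt Real.pi := by
  rw [show (5/2:ℝ) = 3/2 + 1 by norm_num, Real.Gamma_add_one (by norm_num),
    show (3/2:ℝ) = 1/2 + 1 by norm_num, Real.Gamma_add_one (by norm_num),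
    Real.Gamma_one_half_eq]
  ring

lemma g11_three : g11 3 = (3:ℝ) ^ ((7:ℝ)/6) * Real.sqrt (Real.pi * Real.Gamma (10/3))
    / (2:ℝ) ^ ((10:ℝ)/3) := by
  have hG : 0 < Real.Gamma (10/3) := Real.Gamma_pos_of_pos (by norm_num)
  have hπ : 0 < Real.pi := Real.pi_pos
  have hsπ : 0 < Real.sqrt Real.pi := Real.sqrt_pos.mpr hπ
  rw [g11, show (3:ℝ)/3 + 7/3 = 10/3 by norm_num, show (3:ℝ)/3 + 2 = 3 by norm_num,
    show (3:ℝ)/2 + 1 = 5/2 by norm_num, show (3:ℝ)/2 + 3/2 = 3 by norm_num,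
    show ((3:ℝ) + 1)/3 = 4/3 by norm_num, Gamma_three, Gamma_five_halves]
  set G := Real.Gamma (10/3) with hGdef
  have hA : (0:ℝ) < 3 * G / (2 * 2) := by positivity
  have hM : (0:ℝ) < 3/4 * Real.sqrt Real.pi / 2 := by positivity
  -- log facts
  have l4 : Real.log (2 * 2 : ℝ) = 2 * Real.log 2 := by
    rw [Real.log_mul (by norm_num) (by norm_num)]; ring
  have lA : Real.log (3 * G / (2 * 2)) = Real.log 3 + Real.log G - 2 * Real.log 2 := by
    rw [Real.log_div (by positivity) (by norm_num), Real.log_mul (by norm_num) hG.ne', l4]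
  have lM : Real.log (3/4 * Real.sqrt Real.pi / 2)
      = Real.log 3 + Real.log Real.pi / 2 - 3 * Real.log 2 := by
    rw [Real.log_div (by positivity) (by norm_num), Real.log_mul (by norm_num) hsπ.ne',
      Real.log_sqrt hπ.le, show (3/4:ℝ) = 3 / 2^2 by norm_num,
      Real.log_div (by norm_num) (by norm_num), Real.log_pow]
    push_cast; ring
  have lC : Real.log (4/3 : ℝ) = 2 * Real.log 2 - Real.log 3 := by
    rw [show (4/3:ℝ) = 2^2 / 3 by norm_num, Real.log_div (by norm_num) (by norm_num),
      Real.log_pow]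
    push_cast; ring
  have lPG : Real.log (Real.pi * G) = Real.log Real.pi + Real.log G :=
    Real.log_mul hπ.ne' hG.ne'
  rw [show Real.sqrt (3*G/(2*2)) = Real.exp ((Real.log 3 + Real.log G - 2*Real.log 2) * (1/2))
      from by rw [← lA, Real.sqrt_eq_rpow, Real.rpow_def_of_pos hA],
    show ((4:ℝ)/3) ^ ((1:ℝ)/3) = Real.exp ((2*Real.log 2 - Real.log 3) * (1/3))
      from by rw [← lC, Real.rpow_def_of_pos (by norm_num : (0:ℝ) < 4/3)],
    show (3/4*Real.sqrt Real.pi/2 : ℝ)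
        = Real.exp (Real.log 3 + Real.log Real.pi/2 - 3*Real.log 2)
      from by rw [← lM, Real.exp_log hM],
    show ((3:ℝ)) ^ ((7:ℝ)/6) = Real.exp (Real.log 3 * (7/6))
      from Real.rpow_def_of_pos (by norm_num) _,
    show Real.sqrt (Real.pi * G) = Real.exp ((Real.log Real.pi + Real.log G) * (1/2))
      from by rw [← lPG, Real.sqrt_eq_rpow, Real.rpow_def_of_pos (by positivity)],
    show ((2:ℝ)) ^ ((10:ℝ)/3) = Real.exp (Real.log 2 * (10/3))
      from Real.rpow_def_of_pos (by norm_num) _,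
    ← Real.exp_add, ← Real.exp_add, ← Real.exp_add, ← Real.exp_sub, Real.exp_eq_exp]
  ring

end Stmt11aux

/-- For `x ≥ 3`:
`1 < (3Γ(x/3+7/3)/(2Γ(x/3+2)))^(1/2)·(Γ(x/2+1)/Γ(x/2+3/2))·((x+1)/3)^(1/3)
   ≤ 3^(7/6)√(πΓ(10/3))/2^(10/3)`, with the maximum attained at `x = 3`. -/
theorem stmt11 :
    (∀ x : ℝ, 3 ≤ x → 1 < g11 x ∧
      g11 x ≤ (3:ℝ) ^ ((7:ℝ)/6) * Real.sqrt (Real.pi * Real.Gamma (10/3))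
        / (2:ℝ) ^ ((10:ℝ)/3)) ∧
    g11 3 = (3:ℝ) ^ ((7:ℝ)/6) * Real.sqrt (Real.pi * Real.Gamma (10/3))
        / (2:ℝ) ^ ((10:ℝ)/3) := by
  constructor
  · intro x hx
    refine ⟨Stmt11aux.one_lt_g11 hx, ?_⟩
    rw [← Stmt11aux.g11_three]
    exact Stmt11aux.g11_le_g11_three hx
  · exact Stmt11aux.g11_three
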